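/- For infinite cardinals κ ≤ λ, there exists a pre-Hilbert space of dimension κ and density λ if and only if λ ≤ κ^ℵ0. -/

import Mathlib

set_option maxHeartbeats 1000000
set_option synthInstance.maxHeartbeats 400000

noncomputable section
open scoped InnerProductSpace ENNReal

/-- An orthonormal subset of an inner product space. -/
def OrthSet (k : Type*) {E : Type*} [RCLike k] [NormedAddCommGroup E]
    [InnerProductSpace k E] (B : Set E) : Prop :=
  Orthonormal k ((↑) : B → E)

/-- A maximal orthonormal system of the whole space. -/
def MaximalOrthSet (k : Type*) {E : Type*} [RCLike k] [NormedAddCommGroup E]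
    [InnerProductSpace k E] (B : Set E) : Prop :=
  OrthSet k B ∧ ∀ C : Set E, B ⊆ C → OrthSet k C → C = B

/-- An orthonormal basis (as a set): an orthonormal system whose linear span is dense. -/
def IsOrthBasisSet (k : Type*) {E : Type*} [RCLike k] [NormedAddCommGroup E]
    [InnerProductSpace k E] (B : Set E) : Prop :=
  OrthSet k B ∧ Dense (Submodule.span k B : Set E)

/-- The space has an orthonormal basis (is non-pathological). -/
def HasOrthBasis (k E : Type*) [RCLike k] [NormedAddCommGroup E]
    [InnerProductSpace k E] : Prop :=
  ∃ B : Set E, IsOrthBasisSet k B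

/-- Density: least cardinality of a dense subset. -/
def densityCard (E : Type*) [TopologicalSpace E] : Cardinal :=
  sInf { c | ∃ D : Set E, Dense D ∧ Cardinal.mk D = c }

namespace St10

open Cardinal Set

variable {k : Type} [RCLike k] {E : Type} [NormedAddCommGroup E] [InnerProductSpace k E]

local notation "⟪" x ", " y "⟫" => @inner k _ _ x y

lemma finite_level {C : Set E} (hC : Orthonormal k (Subtype.val : C → E)) (x : E)
    {r : ℝ} (hr : 0 < r) : {c : C | r < ‖⟪(c : E), x⟫‖}.Finite := by
  by_contra hinf
  have hinf' : {c : C | r < ‖⟪(c : E), x⟫‖}.Infinite := hinf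
  obtain ⟨t, hts, htf, htcard⟩ := hinf'.exists_subset_ncard_eq (⌈‖x‖ ^ 2 / r ^ 2⌉₊ + 1)
  have hsum : ∑ c ∈ htf.toFinset, ‖⟪(c : E), x⟫‖ ^ 2 ≤ ‖x‖ ^ 2 :=
    hC.sum_inner_products_le x
  have hlow : ∀ c ∈ htf.toFinset, r ^ 2 ≤ ‖⟪(c : E), x⟫‖ ^ 2 := by
    intro c hc
    have : r < ‖⟪(c : E), x⟫‖ := hts (htf.mem_toFinset.1 hc)
    exact pow_le_pow_left₀ hr.le this.le 2
  have hcard : htf.toFinset.card = ⌈‖x‖ ^ 2 / r ^ 2⌉₊ + 1 := by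
    rw [← htcard, Set.ncard_eq_toFinset_card _ htf]
  have h1 : (htf.toFinset.card : ℝ) * r ^ 2 ≤ ‖x‖ ^ 2 := by
    calc (htf.toFinset.card : ℝ) * r ^ 2 = ∑ _c ∈ htf.toFinset, r ^ 2 := by
          rw [Finset.sum_const, nsmul_eq_mul]
      _ ≤ ∑ c ∈ htf.toFinset, ‖⟪(c : E), x⟫‖ ^ 2 := Finset.sum_le_sum hlow
      _ ≤ ‖x‖ ^ 2 := hsum
  have hr2 : (0:ℝ) < r ^ 2 := by positivity
  have h2 : (htf.toFinset.card : ℝ) ≤ ‖x‖ ^ 2 / r ^ 2 := (le_div_iff₀ hr2).2 h1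
  have h3 : (‖x‖ ^ 2 / r ^ 2 : ℝ) ≤ ⌈‖x‖ ^ 2 / r ^ 2⌉₊ := Nat.le_ceil _
  rw [hcard] at h2
  push_cast at h2
  linarith

lemma countable_inner_support {C : Set E} (hC : Orthonormal k (Subtype.val : C → E)) (x : E) :
    {c : C | ⟪(c : E), x⟫ ≠ 0}.Countable := by
  have hsub : {c : C | ⟪(c : E), x⟫ ≠ 0} ⊆
      ⋃ n : ℕ, {c : C | 1 / (n + 1 : ℝ) < ‖⟪(c : E), x⟫‖} := by
    intro c hc
    have h0 : 0 < ‖⟪(c : E), x⟫‖ := norm_pos_iff.2 hc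
    obtain ⟨n, hn⟩ := exists_nat_one_div_lt h0
    exact Set.mem_iUnion.2 ⟨n, hn⟩
  exact Set.Countable.mono hsub
    (Set.countable_iUnion fun n => (finite_level hC x (by positivity)).countable)

lemma card_le_of_witness {C : Set E} (hC : Orthonormal k (Subtype.val : C → E))
    {T : Type} (g : T → E) (hw : ∀ c : C, ∃ t, ⟪(c : E), g t⟫ ≠ 0) :
    Cardinal.mk C ≤ #T * ℵ₀ * ℵ₀ := by
  classical
  have hψ : ∀ c : C, ∃ p : T × ℕ, 1 / (p.2 + 1 : ℝ) < ‖⟪(c : E), g p.1⟫‖ := by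
    intro c
    obtain ⟨t, ht⟩ := hw c
    obtain ⟨n, hn⟩ := exists_nat_one_div_lt (norm_pos_iff.2 ht)
    exact ⟨(t, n), by simpa using hn⟩
  choose ψ hψ' using hψ
  have hfib : ∀ p : T × ℕ, {c : C | ψ c = p}.Finite := by
    intro p
    refine (finite_level hC (g p.1) (r := 1/(p.2+1:ℝ)) (by positivity)).subset ?_
    rintro c (hc : ψ c = p)
    have := hψ' c
    rw [hc] at this
    exact this
  calc #C = #(Σ p : T × ℕ, {c : C // ψ c = p}) :=
        (Cardinal.mk_congr (Equiv.sigmaFiberEquiv ψ)).symm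
    _ = Cardinal.sum (fun p : T × ℕ => #{c : C // ψ c = p}) := Cardinal.mk_sigma _
    _ ≤ Cardinal.sum (fun _ : T × ℕ => ℵ₀) := by
        refine Cardinal.sum_le_sum _ _ fun p => ?_
        haveI : Finite {c : C // ψ c = p} := (hfib p).to_subtype
        exact Cardinal.mk_le_aleph0
    _ = #(T × ℕ) * ℵ₀ := Cardinal.sum_const' _ _
    _ = #T * ℵ₀ * ℵ₀ := by
        rw [Cardinal.mk_prod, Cardinal.mk_nat, Cardinal.lift_id, Cardinal.lift_id]

lemma extend_contradiction {C : Set E} (hmax : MaximalOrthSet k C) {w : E} (hw : ‖w‖ = 1)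
    (horth : ∀ c ∈ C, ⟪c, w⟫ = 0) : False := by
  classical
  have hwC : w ∉ C := by
    intro hwc
    have h0 := horth w hwc
    rw [@inner_self_eq_norm_sq_to_K k, hw] at h0
    simp at h0
  have hins : OrthSet k (insert w C) := by
    rw [OrthSet, orthonormal_subtype_iff_ite]
    intro v hv v' hv'
    rcases Set.mem_insert_iff.1 hv with h1 | h1 <;> rcases Set.mem_insert_iff.1 hv' with h2 | h2
    · rw [h1, h2, if_pos rfl, @inner_self_eq_norm_sq_to_K k, hw]
      norm_num
    · rw [if_neg (fun heq => hwC (by rw [← h1.symm.trans heq] at h2; exact h2)), h1,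
        ← inner_conj_symm, horth v' h2, map_zero]
    · rw [if_neg (fun heq => hwC (by rw [← h2.symm.trans heq.symm] at h1; exact h1)), h2,
        horth v h1]
    · exact orthonormal_subtype_iff_ite.1 hmax.1 v h1 v' h2
  have heq := hmax.2 (insert w C) (Set.subset_insert _ _) hins
  exact hwC (heq ▸ Set.mem_insert w C)

lemma exists_maximal (k : Type) [RCLike k] (E : Type) [NormedAddCommGroup E]
    [InnerProductSpace k E] : ∃ B : Set E, MaximalOrthSet k B := by
  classical
  have hz : ∀ c ⊆ {B : Set E | OrthSet k B}, IsChain (· ⊆ ·) c →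
      ∃ ub ∈ {B : Set E | OrthSet k B}, ∀ s ∈ c, s ⊆ ub := by
    intro c hcS hchain
    refine ⟨⋃₀ c, ?_, fun s hs => Set.subset_sUnion_of_mem hs⟩
    rw [Set.mem_setOf_eq, OrthSet, orthonormal_subtype_iff_ite]
    intro v hv w hw
    obtain ⟨s, hs, hvs⟩ := hv
    obtain ⟨s', hs', hws⟩ := hw
    rcases hchain.total hs hs' with h | h
    · exact orthonormal_subtype_iff_ite.1 (hcS hs') v (h hvs) w hws
    · exact orthonormal_subtype_iff_ite.1 (hcS hs) v hvs w (h hws)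
  obtain ⟨m, hm⟩ := zorn_subset {B : Set E | OrthSet k B} hz
  exact ⟨m, hm.prop, fun C hmC hCorth => subset_antisymm (hm.le_of_ge hCorth hmC) hmC⟩

theorem forward {kap lam : Cardinal} (hk : Cardinal.aleph0 ≤ kap)
    (hdim : ∀ B : Set E, MaximalOrthSet k B → #B = kap)
    (hden : densityCard E = lam) : lam ≤ kap ^ Cardinal.aleph0 := by
  classical
  have h1 : lam ≤ #E := by
    rw [← hden]
    have hmem : #E ∈ {c | ∃ D : Set E, Dense D ∧ #D = c} :=
      ⟨Set.univ, dense_univ, Cardinal.mk_univ⟩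
    exact csInf_le' hmem
  obtain ⟨B, hB⟩ := exists_maximal k E
  have hBk : #B = kap := hdim B hB
  have hBinf : Infinite B := Cardinal.infinite_iff.2 (by rw [hBk]; exact hk)
  obtain ⟨b₀⟩ : Nonempty B := inferInstance
  have hcnt : ∀ x : E, (insert b₀ {b : B | ⟪(b : E), x⟫ ≠ 0}).Countable := fun x =>
    (countable_inner_support hB.1 x).insert b₀
  have hne : ∀ x : E, (insert b₀ {b : B | ⟪(b : E), x⟫ ≠ 0}).Nonempty := fun x =>
    ⟨b₀, Set.mem_insert _ _⟩
  choose g hg using fun x => (hcnt x).exists_eq_range (hne x)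
  have hinj : Function.Injective
      (fun x : E => ((g x, fun n => ⟪(g x n : E), x⟫) : (ℕ → B) × (ℕ → k))) := by
    intro x y hxy
    have h1' : g x = g y := congrArg Prod.fst hxy
    have h2 : ∀ n, ⟪(g x n : E), x⟫ = ⟪(g y n : E), y⟫ := fun n =>
      congrFun (congrArg Prod.snd hxy) n
    have key : ∀ b : B, ⟪(b : E), x⟫ = ⟪(b : E), y⟫ := by
      intro b
      by_cases hbx : b ∈ Set.range (g x)
      · obtain ⟨n, rfl⟩ := hbx
        rw [h2 n, h1']
      · have hb1 : ⟪(b : E), x⟫ = 0 := by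
          by_contra h
          exact hbx (hg x ▸ Set.mem_insert_of_mem _ (h : b ∈ {b : B | ⟪(b : E), x⟫ ≠ 0}))
        have hb2 : ⟪(b : E), y⟫ = 0 := by
          by_contra h
          refine hbx ?_
          rw [h1']
          exact hg y ▸ Set.mem_insert_of_mem _ (h : b ∈ {b : B | ⟪(b : E), y⟫ ≠ 0})
        rw [hb1, hb2]
    by_contra hne'
    have hzne : x - y ≠ 0 := sub_ne_zero.2 hne'
    refine extend_contradiction hB (norm_smul_inv_norm (𝕜 := k) hzne) ?_
    intro c hc
    rw [inner_smul_right, inner_sub_right]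
    have := key ⟨c, hc⟩
    rw [this, sub_self, mul_zero]
  -- cardinality bookkeeping
  have hkcard : #k ≤ 𝔠 := by
    have hinjk : Function.Injective (fun z : k => ((RCLike.re z : ℝ), (RCLike.im z : ℝ))) := by
      intro a b h
      have h1' : RCLike.re a = RCLike.re b := congrArg Prod.fst h
      have h2' : RCLike.im a = RCLike.im b := congrArg Prod.snd h
      rw [← RCLike.re_add_im a, ← RCLike.re_add_im b, h1', h2']
    calc #k ≤ #(ℝ × ℝ) := Cardinal.mk_le_of_injective hinjk
      _ = 𝔠 * 𝔠 := by rw [Cardinal.mk_prod, Cardinal.mk_real, Cardinal.lift_id]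
      _ = 𝔠 := Cardinal.mul_eq_self Cardinal.aleph0_le_continuum
  have h2le : (2 : Cardinal) ≤ kap := by
    have h := le_trans (Cardinal.nat_lt_aleph0 2).le hk
    simpa using h
  have hpow_inf : Cardinal.aleph0 ≤ kap ^ Cardinal.aleph0 :=
    hk.trans (Cardinal.self_le_power kap Cardinal.one_le_aleph0)
  have hcont : 𝔠 ^ Cardinal.aleph0 = 𝔠 := by
    rw [show (𝔠:Cardinal) = 2 ^ Cardinal.aleph0 from rfl, ← Cardinal.power_mul, Cardinal.aleph0_mul_aleph0]
  have hEle : #E ≤ kap ^ Cardinal.aleph0 := by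
    have hEl := Cardinal.mk_le_of_injective hinj
    have e1 : #((ℕ → B) × (ℕ → k)) = #(ℕ → B) * #(ℕ → k) := by
      rw [Cardinal.mk_prod, Cardinal.lift_id, Cardinal.lift_id]
    have e2 : #(ℕ → B) = kap ^ Cardinal.aleph0 := by
      rw [← Cardinal.power_def, hBk, Cardinal.mk_nat]
    have e3 : #(ℕ → k) ≤ kap ^ Cardinal.aleph0 := by
      have : #(ℕ → k) = #k ^ Cardinal.aleph0 := by
        rw [← Cardinal.power_def, Cardinal.mk_nat]
      rw [this]
      calc #k ^ Cardinal.aleph0 ≤ 𝔠 ^ Cardinal.aleph0 := Cardinal.power_le_power_right hkcard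
        _ = 𝔠 := hcont
        _ = 2 ^ Cardinal.aleph0 := rfl
        _ ≤ kap ^ Cardinal.aleph0 := Cardinal.power_le_power_right h2le
    calc #E ≤ #((ℕ → B) × (ℕ → k)) := hEl
      _ = #(ℕ → B) * #(ℕ → k) := e1
      _ ≤ (kap ^ Cardinal.aleph0) * (kap ^ Cardinal.aleph0) := by
          rw [e2]; exact mul_le_mul_right e3 _
      _ = kap ^ Cardinal.aleph0 := Cardinal.mul_eq_self hpow_inf
  exact h1.trans hEle


/-! ### The construction for the reverse direction -/

section Construction

variable {k : Type} [RCLike k] {A Fty : Type}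

attribute [local instance] Classical.propDecidable

/-- index type -/
abbrev Idx (A Fty : Type) := (List A) ⊕ Fty

/-- ambient Hilbert space -/
abbrev Hsp (k A Fty : Type) [RCLike k] := lp (fun _ : Idx A Fty => k) 2

/-- basis vectors indexed by nodes of the tree `List A` -/
def ev (k : Type) [RCLike k] {A Fty : Type} (t : List A) : Hsp k A Fty :=
  lp.single 2 (Sum.inl t) 1

/-- the branch: prefixes of `em f` -/
def pref (em : Fty ↪ (ℕ → A)) (f : Fty) (n : ℕ) : List A :=
  (List.range n).map (em f)

@[simp] lemma pref_length (em : Fty ↪ (ℕ → A)) (f : Fty) (n : ℕ) :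
    (pref em f n).length = n := by simp [pref]

lemma pref_eq_pref {em : Fty ↪ (ℕ → A)} {f g : Fty} {n : ℕ}
    (h : pref em f n = pref em g n) {m : ℕ} (hm : m < n) : em f m = em g m := by
  have h1 := congrArg (fun l : List A => l[m]?) h
  simp only [pref, List.getElem?_map, List.getElem?_range, hm, if_pos] at h1
  simpa using h1

/-- the function underlying the vector `u_f` -/
def ufn (k : Type) [RCLike k] (em : Fty ↪ (ℕ → A)) (f : Fty) : Idx A Fty → k :=
  Sum.elim (fun t => if t = pref em f t.length then (((2:ℝ)⁻¹ ^ (t.length + 1) : ℝ) : k) else 0)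
    (fun g => if g = f then (1:k) else 0)

/-- enumeration of the support of `u_f` -/
def jmap (em : Fty ↪ (ℕ → A)) (f : Fty) : ℕ → Idx A Fty
  | 0 => Sum.inr f
  | n+1 => Sum.inl (pref em f n)

lemma jmap_inj (em : Fty ↪ (ℕ → A)) (f : Fty) : Function.Injective (jmap em f) := by
  intro m n h
  match m, n, h with
  | 0, 0, _ => rfl
  | 0, n+1, h => exact absurd h (by simp [jmap])
  | m+1, 0, h => exact absurd h (by simp [jmap])
  | m+1, n+1, h =>
    have : pref em f m = pref em f n := by simpa [jmap] using h
    have := congrArg List.length this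
    simpa using this

lemma ufn_jmap (em : Fty ↪ (ℕ → A)) (f : Fty) (n : ℕ) :
    ufn k em f (jmap em f n) = (((2:ℝ)⁻¹ ^ n : ℝ) : k) := by
  match n with
  | 0 => simp [ufn, jmap]
  | n+1 => simp [ufn, jmap]

lemma ufn_vanish (em : Fty ↪ (ℕ → A)) (f : Fty) :
    ∀ i ∉ Set.range (jmap em f), ufn k em f i = 0 := by
  rintro (t | g) hi
  · rw [ufn, Sum.elim_inl, if_neg]
    intro ht
    exact hi ⟨t.length + 1, by simp [jmap, ← ht]⟩
  · rw [ufn, Sum.elim_inr, if_neg]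
    intro hg
    exact hi ⟨0, by simp [jmap, hg]⟩

lemma norm_ufn_jmap (em : Fty ↪ (ℕ → A)) (f : Fty) (n : ℕ) :
    ‖ufn k em f (jmap em f n)‖ = (2:ℝ)⁻¹ ^ n := by
  rw [ufn_jmap, RCLike.norm_ofReal, abs_of_nonneg (by positivity)]

lemma rpow_two_toReal (x : ℝ) (hx : 0 ≤ x) : x ^ (2 : ℝ≥0∞).toReal = x ^ (2:ℕ) := by
  rw [ENNReal.toReal_ofNat, show ((2:ℝ)) = ((2:ℕ):ℝ) by norm_num, Real.rpow_natCast]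

lemma summable_ufn (em : Fty ↪ (ℕ → A)) (f : Fty) :
    Summable (fun i : Idx A Fty => ‖ufn k em f i‖ ^ (2 : ℝ≥0∞).toReal) := by
  refine ((jmap_inj em f).summable_iff ?_).1 ?_
  · intro i hi
    rw [ufn_vanish em f i hi, norm_zero]
    rw [rpow_two_toReal 0 le_rfl]
    simp
  · have hgeo : Summable (fun n : ℕ => ((4:ℝ)⁻¹) ^ n) :=
      summable_geometric_of_lt_one (by norm_num) (by norm_num)
    refine hgeo.congr fun n => ?_
    rw [Function.comp_apply, norm_ufn_jmap, rpow_two_toReal _ (by positivity), ← pow_mul,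
      show (4:ℝ)⁻¹ = (2:ℝ)⁻¹ ^ 2 by norm_num, ← pow_mul, Nat.mul_comm]

lemma memlp_ufn (em : Fty ↪ (ℕ → A)) (f : Fty) : Memℓp (ufn k em f) 2 :=
  memℓp_gen (summable_ufn em f)

/-- the vectors `u_f` -/
def uf (k : Type) [RCLike k] (em : Fty ↪ (ℕ → A)) (f : Fty) : Hsp k A Fty :=
  ⟨ufn k em f, memlp_ufn em f⟩


lemma uf_apply_inr (em : Fty ↪ (ℕ → A)) (f g : Fty) :
    (uf k em f) (Sum.inr g) = if g = f then (1:k) else 0 := rfl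

lemma uf_apply_inl (em : Fty ↪ (ℕ → A)) (f : Fty) (t : List A) :
    (uf k em f) (Sum.inl t)
      = if t = pref em f t.length then (((2:ℝ)⁻¹ ^ (t.length + 1) : ℝ) : k) else 0 := rfl

lemma ev_apply_self (t : List A) : (ev k (A := A) (Fty := Fty) t) (Sum.inl t) = 1 :=
  lp.single_apply_self 2 (Sum.inl t) 1

lemma ev_apply_ne (t : List A) {i : Idx A Fty} (h : i ≠ Sum.inl t) :
    (ev k (A := A) (Fty := Fty) t) i = 0 :=
  lp.single_apply_ne 2 (Sum.inl t) 1 h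

lemma norm_ev (t : List A) : ‖ev k (A := A) (Fty := Fty) t‖ = 1 := by
  have := lp.norm_single (E := fun _ : Idx A Fty => k) (by norm_num : (0:ℝ≥0∞) < 2)
    (Sum.inl t) (1:k)
  simpa [ev] using this

lemma inner_ev_left (t : List A) (x : Hsp k A Fty) :
    (inner k (ev k (A := A) (Fty := Fty) t) x) = x (Sum.inl t) := by
  rw [ev, lp.inner_single_left, RCLike.inner_apply, map_one, mul_one]

lemma inner_ev_right (t : List A) (x : Hsp k A Fty) :
    (inner k x (ev k (A := A) (Fty := Fty) t))
      = (starRingEnd k) (x (Sum.inl t)) := by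
  rw [ev, lp.inner_single_right, RCLike.inner_apply, one_mul]

lemma norm_uf_le (em : Fty ↪ (ℕ → A)) (f : Fty) : ‖uf k em f‖ ≤ 2 := by
  have hp : 0 < (2:ℝ≥0∞).toReal := by norm_num
  have h1 := lp.norm_rpow_eq_tsum hp (uf k em f)
  have hterm : ∀ n : ℕ, ‖(uf k em f) (jmap em f n)‖ ^ (2:ℝ≥0∞).toReal = ((4:ℝ)⁻¹) ^ n := by
    intro n
    rw [show ((uf k em f) (jmap em f n)) = ufn k em f (jmap em f n) from rfl, norm_ufn_jmap,
      rpow_two_toReal _ (by positivity), ← pow_mul,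
      show (4:ℝ)⁻¹ = (2:ℝ)⁻¹ ^ 2 by norm_num, ← pow_mul, Nat.mul_comm]
  have h2 : (∑' i, ‖(uf k em f) i‖ ^ (2:ℝ≥0∞).toReal) = ∑' n : ℕ, ((4:ℝ)⁻¹) ^ n := by
    rw [← (jmap_inj em f).tsum_eq (f := fun i => ‖(uf k em f) i‖ ^ (2:ℝ≥0∞).toReal) ?_]
    · exact tsum_congr hterm
    · intro i hi
      by_contra hmem
      refine (Function.mem_support.1 hi) ?_
      rw [show ((uf k em f) i) = ufn k em f i from rfl, ufn_vanish em f i hmem, norm_zero,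
        rpow_two_toReal 0 le_rfl]
      simp
  rw [h2, tsum_geometric_of_lt_one (by norm_num) (by norm_num)] at h1
  have h3 : ‖uf k em f‖ ^ (2:ℕ) = (1 - (4:ℝ)⁻¹)⁻¹ := by
    rw [← rpow_two_toReal _ (norm_nonneg _), h1]
  norm_num at h3
  nlinarith [norm_nonneg (uf k em f)]


lemma ev_inj : Function.Injective (ev k (A := A) (Fty := Fty)) := by
  intro t t' h
  by_contra hne
  have h1 : (ev k (A := A) (Fty := Fty) t) (Sum.inl t) = 1 := ev_apply_self t
  rw [h, ev_apply_ne t' (fun hc => hne (Sum.inl.inj hc))] at h1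
  exact one_ne_zero h1.symm

lemma uf_inj (em : Fty ↪ (ℕ → A)) : Function.Injective (uf k em) := by
  intro f g h
  by_contra hne
  have h1 : (uf k em f) (Sum.inr f) = 1 := by rw [uf_apply_inr, if_pos rfl]
  rw [h, uf_apply_inr, if_neg hne] at h1
  exact one_ne_zero h1.symm

lemma ev_ne_uf (em : Fty ↪ (ℕ → A)) (t : List A) (f : Fty) :
    ev k (A := A) (Fty := Fty) t ≠ uf k em f := by
  intro h
  have h1 : (ev k (A := A) (Fty := Fty) t) (Sum.inr f) = 0 := ev_apply_ne t (by simp)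
  rw [h, uf_apply_inr, if_pos rfl] at h1
  exact one_ne_zero h1

/-- the pre-Hilbert space -/
def Xspan (k : Type) [RCLike k] (em : Fty ↪ (ℕ → A)) : Submodule k (Hsp k A Fty) :=
  Submodule.span k (Set.range (ev k (A := A) (Fty := Fty)) ∪ Set.range (uf k em))

lemma ev_mem (em : Fty ↪ (ℕ → A)) (t : List A) : ev k (A := A) (Fty := Fty) t ∈ Xspan k em :=
  Submodule.subset_span (Or.inl ⟨t, rfl⟩)

lemma uf_mem (em : Fty ↪ (ℕ → A)) (f : Fty) : uf k em f ∈ Xspan k em :=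
  Submodule.subset_span (Or.inr ⟨f, rfl⟩)

/-- coordinate evaluation as a linear map -/
def evalL (k : Type) [RCLike k] {A Fty : Type} (i : Idx A Fty) : Hsp k A Fty →ₗ[k] k where
  toFun x := x i
  map_add' x y := congrFun (lp.coeFn_add x y) i
  map_smul' c x := congrFun (lp.coeFn_smul c x) i

lemma countable_support_inl (em : Fty ↪ (ℕ → A)) {x : Hsp k A Fty} (hx : x ∈ Xspan k em) :
    {t : List A | x (Sum.inl t) ≠ 0}.Countable := by
  induction hx using Submodule.span_induction with
  | mem z hz =>
    rcases hz with ⟨t, rfl⟩ | ⟨f, rfl⟩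
    · refine (Set.countable_singleton t).mono ?_
      intro t' ht'
      rw [Set.mem_setOf_eq] at ht'
      by_cases hc : t' = t
      · exact Set.mem_singleton_iff.2 hc
      · exact absurd (ev_apply_ne t (fun h => hc (Sum.inl.inj h))) ht'
    · refine (Set.countable_range (pref em f)).mono ?_
      intro t' ht'
      rw [Set.mem_setOf_eq, uf_apply_inl] at ht'
      by_cases hc : t' = pref em f t'.length
      · exact ⟨t'.length, hc.symm⟩
      · exact absurd (if_neg hc) ht'
  | zero => simp
  | add x y hx hy ihx ihy =>
    refine (ihx.union ihy).mono ?_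
    intro t ht
    have hxy : (x + y) (Sum.inl t) = x (Sum.inl t) + y (Sum.inl t) :=
      congrFun (lp.coeFn_add x y) (Sum.inl t)
    rw [Set.mem_setOf_eq, hxy] at ht
    by_contra hcon
    simp only [Set.mem_union, Set.mem_setOf_eq, not_or, not_not] at hcon
    exact ht (by rw [hcon.1, hcon.2, add_zero])
  | smul a x hx ih =>
    refine ih.mono ?_
    intro t ht
    have hax : (a • x) (Sum.inl t) = a • x (Sum.inl t) := congrFun (lp.coeFn_smul a x) (Sum.inl t)
    rw [Set.mem_setOf_eq, hax] at ht
    intro hc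
    exact ht (by rw [hc, smul_zero])


lemma evalL_apply (i : Idx A Fty) (x : Hsp k A Fty) : evalL k i x = x i := rfl

lemma eq_zero_of_inl_coords (em : Fty ↪ (ℕ → A)) {x : Hsp k A Fty} (hx : x ∈ Xspan k em)
    (h0 : ∀ t : List A, x (Sum.inl t) = 0) : x = 0 := by
  obtain ⟨c, hsupp, hsum⟩ := Submodule.mem_span_set.1 hx
  have hcoord : ∀ i : Idx A Fty, x i = ∑ z ∈ c.support, c z * (z : Hsp k A Fty) i := by
    intro i
    have h1 : evalL k i x = c.sum fun z r => r * evalL k i z := by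
      rw [← hsum, map_finsuppSum]
      exact Finsupp.sum_congr fun z _ => by rw [map_smul, smul_eq_mul]
    rw [evalL_apply] at h1
    rw [h1, Finsupp.sum]
    exact Finset.sum_congr rfl fun z _ => rfl
  have hGfin : (Set.Finite ((uf k em) ⁻¹' (c.support : Set (Hsp k A Fty)))) :=
    c.support.finite_toSet.preimage (uf_inj em).injOn
  have hTfin : (Set.Finite ((ev k (A := A) (Fty := Fty)) ⁻¹' (c.support : Set (Hsp k A Fty)))) :=
    c.support.finite_toSet.preimage (ev_inj (k := k) (A := A) (Fty := Fty)).injOn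
  have hG : ∀ f : Fty, uf k em f ∉ c.support := by
    intro f₀ hf₀
    have hdw : ∀ g : Fty, ∃ m, (g ≠ f₀ → em g m ≠ em f₀ m) := by
      intro g
      by_cases hg : g = f₀
      · exact ⟨0, fun h => absurd hg h⟩
      · by_contra hcon
        push_neg at hcon
        exact hg (em.injective (funext fun m => (hcon m).2))
    choose dwit hdw' using hdw
    set Nfin : Finset ℕ := (hTfin.toFinset.image List.length) ∪
        ((hGfin.toFinset.erase f₀).image dwit) with hNfin
    set N : ℕ := Nfin.sup id + 1 with hN
    have hTlt : ∀ t ∈ hTfin.toFinset, t.length < N := by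
      intro t ht
      have hmem : t.length ∈ Nfin :=
        Finset.mem_union_left _ (Finset.mem_image_of_mem List.length ht)
      have h : t.length ≤ Nfin.sup id := Finset.le_sup (f := (id : ℕ → ℕ)) hmem
      omega
    have hdlt : ∀ g ∈ hGfin.toFinset.erase f₀, dwit g < N := by
      intro g hg
      have hmem : dwit g ∈ Nfin :=
        Finset.mem_union_right _ (Finset.mem_image_of_mem dwit hg)
      have h : dwit g ≤ Nfin.sup id := Finset.le_sup (f := (id : ℕ → ℕ)) hmem
      omega
    set τ : List A := pref em f₀ N with hτ
    have hτlen : τ.length = N := pref_length em f₀ N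
    have hterm : ∀ z ∈ c.support, c z * (z : Hsp k A Fty) (Sum.inl τ)
        = if z = uf k em f₀ then c z * (((2:ℝ)⁻¹ ^ (N + 1) : ℝ) : k) else 0 := by
      intro z hz
      rcases hsupp hz with ⟨t, rfl⟩ | ⟨g, rfl⟩
      · have ht : t ∈ hTfin.toFinset := hTfin.mem_toFinset.2 hz
        have hne' : Sum.inl (β := Fty) τ ≠ Sum.inl t := by
          intro hc
          have hlen := congrArg List.length (Sum.inl.inj hc)
          rw [hτlen] at hlen
          have := hTlt t ht
          omega
        rw [ev_apply_ne t hne', mul_zero, if_neg (ev_ne_uf em t f₀)]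
      · have hgG : g ∈ hGfin.toFinset := hGfin.mem_toFinset.2 hz
        by_cases hgf : g = f₀
        · subst hgf
          have hcond : τ = pref em g τ.length := by rw [hτlen]
          rw [uf_apply_inl, if_pos hcond, if_pos rfl, hτlen]
        · have hcond : τ ≠ pref em g τ.length := by
            rw [hτlen]
            intro hc
            exact hdw' g hgf (pref_eq_pref hc.symm (hdlt g (Finset.mem_erase.2 ⟨hgf, hgG⟩)))
          rw [uf_apply_inl, if_neg hcond, mul_zero, if_neg (fun hc => hgf (uf_inj em hc))]
    have hsum0 : (0:k) = c (uf k em f₀) * (((2:ℝ)⁻¹ ^ (N + 1) : ℝ) : k) := by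
      have h1 := hcoord (Sum.inl τ)
      rw [h0 τ, Finset.sum_congr rfl hterm, Finset.sum_ite_eq' c.support (uf k em f₀)
        (fun z => c z * (((2:ℝ)⁻¹ ^ (N + 1) : ℝ) : k)), if_pos hf₀] at h1
      exact h1
    have hval : (((2:ℝ)⁻¹ ^ (N + 1) : ℝ) : k) ≠ 0 := by
      rw [ne_eq, RCLike.ofReal_eq_zero]
      positivity
    rcases mul_eq_zero.1 hsum0.symm with h | h
    · exact (Finsupp.mem_support_iff.1 hf₀) h
    · exact hval h
  have hsuppe : ∀ z ∈ c.support, ∃ t, z = ev k (A := A) (Fty := Fty) t := by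
    intro z hz
    rcases hsupp hz with ⟨t, rfl⟩ | ⟨g, rfl⟩
    · exact ⟨t, rfl⟩
    · exact absurd hz (hG g)
  have hce : ∀ t : List A, c (ev k (A := A) (Fty := Fty) t) = 0 := by
    intro t
    have h1 := hcoord (Sum.inl t)
    rw [h0 t] at h1
    have hterm2 : ∀ z ∈ c.support, c z * (z : Hsp k A Fty) (Sum.inl t)
        = if z = ev k (A := A) (Fty := Fty) t then c z else 0 := by
      intro z hz
      obtain ⟨t', rfl⟩ := hsuppe z hz
      by_cases hc : t' = t
      · subst hc
        rw [ev_apply_self, mul_one, if_pos rfl]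
      · rw [ev_apply_ne t' (fun h => hc (Sum.inl.inj h).symm), mul_zero,
          if_neg (fun h => hc (ev_inj h))]
    rw [Finset.sum_congr rfl hterm2, Finset.sum_ite_eq' c.support
      (ev k (A := A) (Fty := Fty) t) (fun z => c z)] at h1
    by_cases hmem : ev k (A := A) (Fty := Fty) t ∈ c.support
    · rw [if_pos hmem] at h1
      exact h1.symm
    · exact Finsupp.notMem_support_iff.1 hmem
  have hcz : c = 0 := by
    ext z
    by_cases hz : z ∈ c.support
    · obtain ⟨t, rfl⟩ := hsuppe z hz
      rw [hce t]
      rfl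
    · rw [Finsupp.notMem_support_iff.1 hz]
      rfl
  rw [← hsum, hcz, Finsupp.sum_zero_index]


lemma orthSet_card_le (em : Fty ↪ (ℕ → A)) (C : Set ↥(Xspan k em))
    (hC : OrthSet k C) : #C ≤ #(List A) * Cardinal.aleph0 * Cardinal.aleph0 := by
  refine card_le_of_witness hC
    (fun t : List A => (⟨ev k t, ev_mem em t⟩ : ↥(Xspan k em))) ?_
  intro c
  have hcne : ((c : ↥(Xspan k em)) : Hsp k A Fty) ≠ 0 := by
    have h1 : (c : ↥(Xspan k em)) ≠ 0 := Orthonormal.ne_zero hC c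
    simpa using h1
  have hex : ∃ t, ((c : ↥(Xspan k em)) : Hsp k A Fty) (Sum.inl t) ≠ 0 := by
    by_contra hcon
    push_neg at hcon
    exact hcne (eq_zero_of_inl_coords em (c : ↥(Xspan k em)).2 hcon)
  obtain ⟨t, ht⟩ := hex
  refine ⟨t, ?_⟩
  rw [Submodule.coe_inner, inner_ev_right]
  intro hzero
  apply ht
  have h2 := congrArg (starRingEnd k) hzero
  simpa using h2

lemma ev_orthonormal (em : Fty ↪ (ℕ → A)) :
    Orthonormal k (fun t : List A => (⟨ev k t, ev_mem em t⟩ : ↥(Xspan k em))) := by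
  rw [orthonormal_iff_ite]
  intro t t'
  rw [Submodule.coe_inner, inner_ev_left]
  by_cases hc : t = t'
  · subst hc
    rw [ev_apply_self, if_pos rfl]
  · rw [ev_apply_ne t' (fun h => hc (Sum.inl.inj h)), if_neg hc]

lemma maximal_card_ge [Infinite A] (em : Fty ↪ (ℕ → A)) (C : Set ↥(Xspan k em))
    (hC : MaximalOrthSet k C) : #(List A) ≤ #C := by
  have hfincase : ¬ (C : Set ↥(Xspan k em)).Finite := by
    intro hfin
    by_cases hall : ∀ t : List A,
        (⟨ev k t, ev_mem em t⟩ : ↥(Xspan k em)) ∈ Submodule.span k C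
    · have hli : LinearIndependent k
          (fun t : List A => (⟨ev k t, ev_mem em t⟩ : ↥(Xspan k em))) :=
        (ev_orthonormal em).linearIndependent
      have hli2 : LinearIndependent k
          (fun t : List A => (⟨_, hall t⟩ : ↥(Submodule.span k C))) := by
        refine LinearIndependent.of_comp (Submodule.span k C).subtype ?_
        exact hli
      have h1 : #(List A) ≤ Module.rank k ↥(Submodule.span k C) := hli2.cardinal_le_rank
      have h2 : Module.rank k ↥(Submodule.span k C) ≤ #C := rank_span_le (R := k) C
      haveI := hfin.to_subtype
      have h3 : #C < Cardinal.aleph0 := Cardinal.lt_aleph0_of_finite C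
      have h4 : Cardinal.aleph0 ≤ #(List A) := Cardinal.aleph0_le_mk (List A)
      exact absurd (h4.trans (h1.trans h2)) (not_le.2 h3)
    · push_neg at hall
      obtain ⟨t₀, ht₀⟩ := hall
      set x₀ : ↥(Xspan k em) := ⟨ev k t₀, ev_mem em t₀⟩ with hx₀
      set y : ↥(Xspan k em) :=
        x₀ - ∑ c ∈ hfin.toFinset, (inner k c x₀) • c with hy
      have hy0 : y ≠ 0 := by
        intro h
        apply ht₀
        have hfx : x₀ = ∑ c ∈ hfin.toFinset, (inner k c x₀) • c := by
          rwa [hy, sub_eq_zero] at h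
        rw [hfx]
        exact Submodule.sum_mem _ (fun c hc => Submodule.smul_mem _ _
          (Submodule.subset_span (hfin.mem_toFinset.1 hc)))
      have horth : ∀ c₀ ∈ C, (inner k c₀ y) = 0 := by
        intro c₀ hc₀
        rw [hy, inner_sub_right, inner_sum]
        have hterm : ∀ c ∈ hfin.toFinset, (inner k c₀ ((inner k c x₀) • c))
            = if c₀ = c then (inner k c₀ x₀) else 0 := by
          intro c hc
          rw [show (inner k c₀ ((inner k c x₀) • c)) = (inner k c x₀) * inner k c₀ c from
              inner_smul_right c₀ c _,
            orthonormal_subtype_iff_ite.1 hC.1 c₀ hc₀ c (hfin.mem_toFinset.1 hc)]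
          by_cases h : c₀ = c
          · subst h
            simp
          · simp [h]
        rw [Finset.sum_congr rfl hterm,
          Finset.sum_ite_eq hfin.toFinset c₀ (fun _ => (inner k c₀ x₀)),
          if_pos (hfin.mem_toFinset.2 hc₀), sub_self]
      exact extend_contradiction hC (norm_smul_inv_norm (𝕜 := k) hy0) (fun c hc => by
        rw [inner_smul_right, horth c hc, mul_zero])
  by_contra hlt
  rw [not_le] at hlt
  have hCinf : C.Infinite := hfincase
  haveI := hCinf.to_subtype
  have hWle : #(⋃ c : C, {t : List A |
      ((c : ↥(Xspan k em)) : Hsp k A Fty) (Sum.inl t) ≠ 0}) ≤ #C * Cardinal.aleph0 := by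
    refine (Cardinal.mk_iUnion_le _).trans ?_
    refine mul_le_mul' le_rfl ?_
    refine ciSup_le' fun c => ?_
    haveI := (countable_support_inl em (c : ↥(Xspan k em)).2).to_subtype
    exact Cardinal.mk_le_aleph0
  have hWlt : #(⋃ c : C, {t : List A |
      ((c : ↥(Xspan k em)) : Hsp k A Fty) (Sum.inl t) ≠ 0}) < #(List A) := by
    refine hWle.trans_lt ?_
    have hmul : #C * Cardinal.aleph0 = #C := by
      rw [Cardinal.mul_eq_max (Cardinal.aleph0_le_mk C) le_rfl]
      exact max_eq_left (Cardinal.aleph0_le_mk C)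
    rw [hmul]
    exact hlt
  have hex : ∃ t₀ : List A, t₀ ∉ (⋃ c : C, {t : List A |
      ((c : ↥(Xspan k em)) : Hsp k A Fty) (Sum.inl t) ≠ 0}) := by
    by_contra hcon
    push_neg at hcon
    rw [Set.eq_univ_of_forall hcon, Cardinal.mk_univ] at hWlt
    exact lt_irrefl _ hWlt
  obtain ⟨t₀, ht₀⟩ := hex
  refine extend_contradiction hC
    (w := (⟨ev k t₀, ev_mem em t₀⟩ : ↥(Xspan k em))) ?_ ?_
  · rw [Submodule.coe_norm, norm_ev]
  · intro c hc
    rw [Submodule.coe_inner, inner_ev_right]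
    have hz : ((c : ↥(Xspan k em)) : Hsp k A Fty) (Sum.inl t₀) = 0 := by
      by_contra hne
      exact ht₀ (Set.mem_iUnion.2 ⟨⟨c, hc⟩, hne⟩)
    rw [hz, map_zero]


/-- generators as elements of the subspace -/
def gen (em : Fty ↪ (ℕ → A)) : Idx A Fty → ↥(Xspan k em) :=
  Sum.elim (fun t => ⟨ev k t, ev_mem em t⟩) (fun f => ⟨uf k em f, uf_mem em f⟩)

lemma norm_gen_le (em : Fty ↪ (ℕ → A)) (i : Idx A Fty) : ‖gen (k := k) em i‖ ≤ 2 := by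
  cases i with
  | inl t =>
    rw [gen, Sum.elim_inl, Submodule.coe_norm]
    rw [show (((⟨ev k t, ev_mem em t⟩ : ↥(Xspan k em))) : Hsp k A Fty) = ev k t from rfl, norm_ev]
    norm_num
  | inr f =>
    rw [gen, Sum.elim_inr, Submodule.coe_norm]
    exact norm_uf_le em f

/-- rational scalars -/
def genscalar (k : Type) [RCLike k] (p : ℚ × ℚ) : k :=
  ((p.1 : ℝ) : k) + ((p.2 : ℝ) : k) * RCLike.I

lemma k_rat_dense (a : k) {ε : ℝ} (hε : 0 < ε) :
    ∃ p : ℚ × ℚ, ‖a - genscalar k p‖ < ε := by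
  obtain ⟨q, hq⟩ := exists_rat_near (RCLike.re a) (half_pos hε)
  have hb1 : (0:ℝ) < ‖RCLike.I (K := k)‖ + 1 := by positivity
  obtain ⟨r, hr⟩ := exists_rat_near (RCLike.im a) (div_pos (half_pos hε) hb1)
  refine ⟨(q, r), ?_⟩
  have heq : ‖a - genscalar k (q, r)‖
      = ‖((RCLike.re a - q : ℝ) : k) + ((RCLike.im a - r : ℝ) : k) * RCLike.I‖ := by
    congr 1
    rw [genscalar]
    conv_lhs => rw [← RCLike.re_add_im a]
    push_cast
    ring
  rw [heq]
  have h3 : ‖((RCLike.re a - q : ℝ) : k) + ((RCLike.im a - r : ℝ) : k) * RCLike.I‖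
      ≤ |RCLike.re a - q| + |RCLike.im a - r| * ‖RCLike.I (K := k)‖ := by
    refine (norm_add_le _ _).trans ?_
    rw [norm_mul, RCLike.norm_ofReal, RCLike.norm_ofReal]
  have h4 : |RCLike.im a - r| * (‖RCLike.I (K := k)‖ + 1) < ε / 2 := (lt_div_iff₀ hb1).1 hr
  have h5 : |RCLike.im a - r| * ‖RCLike.I (K := k)‖
      ≤ |RCLike.im a - r| * (‖RCLike.I (K := k)‖ + 1) :=
    mul_le_mul_of_nonneg_left (by linarith) (abs_nonneg _)
  linarith

/-- countable-coefficient combinations -/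
def LK (em : Fty ↪ (ℕ → A)) (l : List (Idx A Fty × (ℚ × ℚ))) : ↥(Xspan k em) :=
  (l.map fun p => genscalar k p.2 • gen em p.1).sum

lemma dense_LK (em : Fty ↪ (ℕ → A)) : DenseRange (LK (k := k) em) := by
  rw [Metric.denseRange_iff]
  intro x r hr
  have claim : ∀ s : Finset (Hsp k A Fty),
      (↑s ⊆ Set.range (ev k (A := A) (Fty := Fty)) ∪ Set.range (uf k em)) →
      ∀ coef : Hsp k A Fty → k, ∀ ε : ℝ, 0 < ε →
      ∃ l : List (Idx A Fty × (ℚ × ℚ)),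
        ‖(∑ z ∈ s, coef z • z) - ((LK em l : ↥(Xspan k em)) : Hsp k A Fty)‖ < ε := by
    intro s
    induction s using Finset.induction_on with
    | empty =>
      intro _ coef ε hε
      refine ⟨[], ?_⟩
      simpa [LK] using hε
    | @insert z s hz ih =>
      intro hsub coef ε hε
      obtain ⟨g, hg⟩ : ∃ g : Idx A Fty, ((gen (k := k) em g : ↥(Xspan k em)) : Hsp k A Fty) = z := by
        rcases hsub (Finset.mem_insert_self z s) with ⟨t, ht⟩ | ⟨f, hf⟩
        · exact ⟨Sum.inl t, ht⟩
        · exact ⟨Sum.inr f, hf⟩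
      obtain ⟨p, hp⟩ := k_rat_dense (coef z) (show (0:ℝ) < ε/8 by linarith)
      obtain ⟨l', hl'⟩ := ih (fun w hw => hsub (Finset.mem_insert_of_mem hw)) coef (ε/2)
        (by linarith)
      refine ⟨(g, p) :: l', ?_⟩
      have hLK0 : LK (k := k) em ((g, p) :: l') = genscalar k p • gen em g + LK em l' := by
        rw [LK, List.map_cons, List.sum_cons]
        rfl
      have hLK : ((LK em ((g, p) :: l') : ↥(Xspan k em)) : Hsp k A Fty)
          = genscalar k p • z + ((LK em l' : ↥(Xspan k em)) : Hsp k A Fty) := by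
        rw [hLK0, Submodule.coe_add, Submodule.coe_smul, hg]
      rw [Finset.sum_insert hz, hLK]
      have hrw : coef z • z + (∑ w ∈ s, coef w • w)
          - (genscalar k p • z + ((LK em l' : ↥(Xspan k em)) : Hsp k A Fty))
          = (coef z - genscalar k p) • z
            + ((∑ w ∈ s, coef w • w) - ((LK em l' : ↥(Xspan k em)) : Hsp k A Fty)) := by
        rw [sub_smul]
        abel
      rw [hrw]
      have hnz : ‖z‖ ≤ 2 := by
        rw [← hg, ← Submodule.coe_norm]
        exact norm_gen_le em g
      calc ‖(coef z - genscalar k p) • z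
            + ((∑ w ∈ s, coef w • w) - ((LK em l' : ↥(Xspan k em)) : Hsp k A Fty))‖
          ≤ ‖(coef z - genscalar k p) • z‖
            + ‖(∑ w ∈ s, coef w • w) - ((LK em l' : ↥(Xspan k em)) : Hsp k A Fty)‖ :=
            norm_add_le _ _
        _ ≤ ‖coef z - genscalar k p‖ * ‖z‖ + ε/2 := by
            rw [norm_smul]
            exact add_le_add le_rfl hl'.le
        _ ≤ (ε/8) * 2 + ε/2 := by
            refine add_le_add ?_ le_rfl
            exact mul_le_mul hp.le hnz (norm_nonneg _) (by linarith)
        _ < ε := by linarith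
  obtain ⟨c, hsupp, hsum⟩ := Submodule.mem_span_set.1 x.2
  obtain ⟨l, hl⟩ := claim c.support hsupp c r hr
  refine ⟨l, ?_⟩
  rw [dist_comm, dist_eq_norm, Submodule.coe_norm]
  have hcoe : ((LK em l - x : ↥(Xspan k em)) : Hsp k A Fty)
      = ((LK em l : ↥(Xspan k em)) : Hsp k A Fty) - (x : Hsp k A Fty) := rfl
  rw [hcoe, ← hsum]
  have hfs : (c.sum fun mi r => r • mi) = ∑ z ∈ c.support, c z • z := rfl
  rw [hfs, norm_sub_rev]
  exact hl

lemma dense_lower (em : Fty ↪ (ℕ → A)) (D : Set ↥(Xspan k em)) (hD : Dense D) :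
    Cardinal.mk Fty ≤ #D := by
  have hsep : ∀ f g : Fty, f ≠ g →
      1 ≤ dist (⟨uf k em f, uf_mem em f⟩ : ↥(Xspan k em)) ⟨uf k em g, uf_mem em g⟩ := by
    intro f g hfg
    rw [dist_eq_norm, Submodule.coe_norm]
    have hcoe : (((⟨uf k em f, uf_mem em f⟩ - ⟨uf k em g, uf_mem em g⟩ : ↥(Xspan k em)))
        : Hsp k A Fty) = uf k em f - uf k em g := rfl
    rw [hcoe]
    have h1 : ‖(uf k em f - uf k em g) (Sum.inr f)‖ ≤ ‖uf k em f - uf k em g‖ :=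
      lp.norm_apply_le_norm (by norm_num) _ _
    have h2 : (uf k em f - uf k em g) (Sum.inr f) = 1 := by
      have hsub : (uf k em f - uf k em g) (Sum.inr f)
          = (uf k em f) (Sum.inr f) - (uf k em g) (Sum.inr f) :=
        congrFun (lp.coeFn_sub _ _) _
      rw [hsub, uf_apply_inr, uf_apply_inr, if_pos rfl, if_neg hfg, sub_zero]
    rw [h2, norm_one] at h1
    exact h1
  choose φ hφD hφd using fun f : Fty =>
    hD.exists_dist_lt (⟨uf k em f, uf_mem em f⟩ : ↥(Xspan k em)) (by norm_num : (0:ℝ) < 2⁻¹)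
  have hinj : Function.Injective (fun f : Fty => (⟨φ f, hφD f⟩ : D)) := by
    intro f g h
    by_contra hfg
    have h1 := hsep f g hfg
    have h2 : φ f = φ g := congrArg Subtype.val h
    have h3 := dist_triangle (⟨uf k em f, uf_mem em f⟩ : ↥(Xspan k em)) (φ f)
      (⟨uf k em g, uf_mem em g⟩ : ↥(Xspan k em))
    rw [h2, dist_comm (φ g)] at h3
    have h4 := hφd f
    rw [h2] at h4
    have h5 := hφd g
    have : dist (⟨uf k em g, uf_mem em g⟩ : ↥(Xspan k em)) (φ g) < 2⁻¹ := h5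
    linarith
  exact Cardinal.mk_le_of_injective hinj

end Construction

theorem reverse (k : Type) [RCLike k] {kap lam : Cardinal} (hk : Cardinal.aleph0 ≤ kap)
    (hkl : kap ≤ lam) (hpow : lam ≤ kap ^ Cardinal.aleph0) :
    ∃ (E : Type) (_ : NormedAddCommGroup E) (_ : InnerProductSpace k E),
      (∀ B : Set E, MaximalOrthSet k B → #B = kap) ∧ densityCard E = lam := by
  classical
  haveI hIA : Infinite kap.out := Cardinal.infinite_iff.2 (by rw [Cardinal.mk_out]; exact hk)
  haveI hIF : Infinite lam.out := Cardinal.infinite_iff.2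
    (by rw [Cardinal.mk_out]; exact hk.trans hkl)
  have hlam0 : Cardinal.aleph0 ≤ lam := hk.trans hkl
  obtain ⟨em⟩ : Nonempty (lam.out ↪ (ℕ → kap.out)) := by
    rw [← Cardinal.le_def, ← Cardinal.power_def, Cardinal.mk_out, Cardinal.mk_out,
      Cardinal.mk_nat]
    exact hpow
  refine ⟨↥(Xspan k em), inferInstance, inferInstance, ?_, ?_⟩
  · intro B hB
    refine le_antisymm ?_ ?_
    · have h1 := orthSet_card_le em B hB.1
      have h2 : #(List kap.out) = kap := by rw [Cardinal.mk_list_eq_mk, Cardinal.mk_out]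
      rw [h2] at h1
      have h3 : kap * Cardinal.aleph0 * Cardinal.aleph0 = kap := by
        rw [Cardinal.mul_eq_max hk le_rfl, max_eq_left hk, Cardinal.mul_eq_max hk le_rfl,
          max_eq_left hk]
      rwa [h3] at h1
    · have h1 := maximal_card_ge em B hB
      rwa [Cardinal.mk_list_eq_mk, Cardinal.mk_out] at h1
  · refine le_antisymm ?_ ?_
    · have hDmem : #(Set.range (LK (k := k) em)) ∈
          {c | ∃ D : Set ↥(Xspan k em), Dense D ∧ #D = c} :=
        ⟨Set.range (LK em), dense_LK em, rfl⟩
      refine (csInf_le' hDmem).trans ?_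
      have h1 : #(Set.range (LK (k := k) em))
          ≤ #(List (Idx kap.out lam.out × (ℚ × ℚ))) := Cardinal.mk_range_le
      refine h1.trans ?_
      rw [Cardinal.mk_list_eq_mk]
      calc #(Idx kap.out lam.out × (ℚ × ℚ))
          = #(Idx kap.out lam.out) * #(ℚ × ℚ) := by
            rw [Cardinal.mk_prod, Cardinal.lift_id, Cardinal.lift_id]
        _ ≤ lam * Cardinal.aleph0 := by
            refine mul_le_mul' ?_ Cardinal.mk_le_aleph0
            have hsum : #(Idx kap.out lam.out) = #(List kap.out) + #(lam.out) := by
              rw [Cardinal.mk_sum, Cardinal.lift_id, Cardinal.lift_id]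
            rw [hsum, Cardinal.mk_list_eq_mk, Cardinal.mk_out, Cardinal.mk_out,
              Cardinal.add_eq_max hk, max_eq_right hkl]
        _ = lam := by
            rw [Cardinal.mul_eq_max hlam0 le_rfl, max_eq_left hlam0]
    · refine le_csInf ⟨#(Set.univ : Set ↥(Xspan k em)), Set.univ, dense_univ, rfl⟩ ?_
      rintro c ⟨D, hD, rfl⟩
      have h1 := dense_lower em D hD
      rwa [Cardinal.mk_out] at h1

end St10

/-- for infinite cardinals `κ ≤ λ`, there is a pre-Hilbert space of
dimension `κ` and density `λ` iff `λ ≤ κ^ℵ₀`. -/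
theorem stmt10 (k : Type) [RCLike k] (kap lam : Cardinal)
    (hk : Cardinal.aleph0 ≤ kap) (hkl : kap ≤ lam) :
    (∃ (E : Type) (_ : NormedAddCommGroup E) (_ : InnerProductSpace k E),
      (∀ B : Set E, MaximalOrthSet k B → Cardinal.mk B = kap) ∧
      densityCard E = lam) ↔
    lam ≤ kap ^ Cardinal.aleph0 := by
  constructor
  · rintro ⟨E, hN, hIP, hdim, hden⟩
    exact St10.forward hk hdim hden
  · intro hpow
    exact St10.reverse k hk hkl hpow
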